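/- Let K be a field of characteristic zero and let g be a Lie algebra over K. If for every Lie algebra h over K there exists a universal pair for (g, h) (equivalently, if the functor g ⊗ − : ComAlg_K → LieAlg_K admits a left adjoint), then g is finite-dimensional over K. -/

import Mathlib

/-!
Statement 1: For a field `K` of characteristic zero and a Lie algebra `g` over `K`, if every
Lie algebra `h` over `K` admits a universal pair for `(g, h)` (equivalently, if the functor
`g ⊗ −` from commutative `K`-algebras to Lie `K`-algebras admits a left adjoint), then `g` is
finite-dimensional over `K`.
-/

open TensorProduct

universe u

/-- The base-change Lie bracket on `A ⊗[K] g` is `K`-bilinear, so `A ⊗[K] g` is a Lie algebra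
over `K` (and not merely over `A`). -/
noncomputable instance baseChangeLieAlgebra {K : Type u} [Field K]
    {A : Type u} [CommRing A] [Algebra K A]
    {L : Type u} [LieRing L] [LieAlgebra K L] : LieAlgebra K (A ⊗[K] L) :=
  { (inferInstance : Module K (A ⊗[K] L)) with
    lie_smul := fun t x y => by
      rw [← algebraMap_smul A t y, lie_smul, algebraMap_smul] }

/-- `(A, η)` is a universal pair for `(g, h)`: for every commutative `K`-algebra `C` and
every Lie algebra morphism `f : h → C ⊗ g` there is a unique `K`-algebra homomorphism
`Φ : A → C` with `f = (Φ ⊗ id_g) ∘ η`. -/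
def IsUniversalLiePair (K : Type u) [Field K]
    (g : Type u) [LieRing g] [LieAlgebra K g]
    (h : Type u) [LieRing h] [LieAlgebra K h]
    (A : Type u) [CommRing A] [Algebra K A]
    (η : h →ₗ⁅K⁆ A ⊗[K] g) : Prop :=
  ∀ (C : Type u) [CommRing C] [Algebra K C], ∀ f : h →ₗ⁅K⁆ C ⊗[K] g,
    ∃! Φ : A →ₐ[K] C, ∀ x : h, f x = LinearMap.rTensor g Φ.toLinearMap (η x)

/-- A universal pair for `(g, h)`: a commutative `K`-algebra together with a Lie algebra
morphism `η : h → A ⊗ g` satisfying the universal property. -/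
structure UniversalLiePair (K : Type u) [Field K]
    (g : Type u) [LieRing g] [LieAlgebra K g]
    (h : Type u) [LieRing h] [LieAlgebra K h] : Type (u + 1) where
  A : Type u
  [commRingA : CommRing A]
  [algebraA : Algebra K A]
  η : h →ₗ⁅K⁆ A ⊗[K] g
  universal : IsUniversalLiePair K g h A η

/-- If every Lie algebra `h` over `K` admits a universal pair for `(g, h)`, then `g` is
finite-dimensional over `K`. -/
theorem finiteDimensional_of_forall_exists_universalLiePair
    (K : Type u) [Field K] [CharZero K]
    (g : Type u) [LieRing g] [LieAlgebra K g]
    (huniv : ∀ (h : Type u) [LieRing h] [LieAlgebra K h], Nonempty (UniversalLiePair K g h)) :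
    FiniteDimensional K g := by
    classical
  letI : LieRing K := LieRing.ofAssociativeRing
  have P := (huniv K).some
  letI := P.commRingA
  letI := P.algebraA
  have hu := P.universal
  set η := P.η with hη
  obtain ⟨s, hs⟩ := TensorProduct.exists_finset (η 1)
  refine ⟨⟨s.image Prod.snd, eq_top_iff.mpr fun v _ => ?_⟩⟩
  -- the Lie morphism K → K ⊗ g, t ↦ t ⊗ v
  let f : K →ₗ⁅K⁆ K ⊗[K] g :=
    { toLinearMap := (TensorProduct.mk K K g).flip v
      map_lie' := by
        intro x y
        simp [TensorProduct.mk, Ring.lie_def, mul_comm,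
          LieAlgebra.ExtendScalars.bracket_tmul] }
  obtain ⟨Φ, hΦ, -⟩ := hu K f
  have h1 : (1 : K) ⊗ₜ[K] v = LinearMap.rTensor g Φ.toLinearMap (η 1) := hΦ 1
  rw [hs, map_sum] at h1
  have h2 : v = ∑ p ∈ s, Φ p.1 • p.2 := by
    have := congrArg (TensorProduct.lid K g) h1
    simpa [TensorProduct.lid_tmul] using this
  rw [h2]
  exact Submodule.sum_mem _ fun p hp =>
    Submodule.smul_mem _ _ (Submodule.subset_span (Finset.mem_image_of_mem Prod.snd hp))
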